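/- The mean-adjusted all-in-one rule A_ma, defined by A_ma^X = (S^X − E[S^X] + E[X₁], E[X₂], …, E[Xₙ]) for X ∈ 𝒳ⁿ, is a risk sharing rule on 𝒳 = L¹(Ω, 𝓕, ℙ) satisfying Axioms AF, RA and OA; if moreover there exists a non-constant integrable random variable on (Ω, 𝓕, ℙ), then A_ma does not satisfy Axiom RF. -/

import Mathlib

open MeasureTheory

noncomputable section

/-- The σ-field generated by (the canonical strongly measurable representative of)
an L¹ random variable. -/
def sigmaGen {Ω : Type*} [MeasurableSpace Ω] {μ : MeasureTheory.Measure Ω}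
    (f : MeasureTheory.Lp ℝ 1 μ) : MeasurableSpace Ω :=
  MeasurableSpace.comap (f : Ω → ℝ) inferInstance

lemma my_coeFn_sum {Ω : Type*} [MeasurableSpace Ω] {μ : Measure Ω} {ι : Type*}
    (s : Finset ι) (f : ι → Lp ℝ 1 μ) :
    ((∑ i ∈ s, f i : Lp ℝ 1 μ) : Ω → ℝ) =ᵐ[μ] fun ω => ∑ i ∈ s, (f i : Ω → ℝ) ω := by
  classical
  induction s using Finset.induction_on with
  | empty => simp only [Finset.sum_empty]; exact Lp.coeFn_zero (E := ℝ) (p := 1) (μ := μ)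
  | insert a s hx ih =>
    rw [Finset.sum_insert hx]
    filter_upwards [Lp.coeFn_add (f a) (∑ i ∈ s, f i), ih] with ω h1 h2
    rw [h1, Pi.add_apply, h2, Finset.sum_insert hx]

lemma my_integral_sum {Ω : Type*} [MeasurableSpace Ω] {μ : Measure Ω} {ι : Type*}
    (s : Finset ι) (f : ι → Lp ℝ 1 μ) :
    ∫ ω, ((∑ i ∈ s, f i : Lp ℝ 1 μ) : Ω → ℝ) ω ∂μ = ∑ i ∈ s, ∫ ω, (f i : Ω → ℝ) ω ∂μ := by
  rw [integral_congr_ae (my_coeFn_sum s f)]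
  exact integral_finset_sum s fun i _ => L1.integrable_coeFn (f i)

/-- the mean-adjusted all-in-one rule
A_ma^X = (S^X − E[S^X] + E[X₁], E[X₂], …, E[Xₙ]) is a risk sharing rule satisfying
Axioms AF, RA and OA; and if some non-constant integrable random variable exists,
it does not satisfy Axiom RF.  (Any map whose components are a.s. equal to the defining
formulas is such a rule.) -/
theorem mean_adjusted_all_in_one_rule
    {Ω : Type*} [MeasurableSpace Ω] {μ : Measure Ω} [IsProbabilityMeasure μ]
    {n : ℕ} (hn : 3 ≤ n)
    (A : (Fin n → Lp ℝ 1 μ) → (Fin n → Lp ℝ 1 μ))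
    -- A is the mean-adjusted all-in-one rule (the first agent is indexed by ⟨0, _⟩)
    (hspec₁ : ∀ X, (A X (⟨0, by omega⟩ : Fin n) : Ω → ℝ) =ᵐ[μ]
        fun ω => ((∑ j, X j : Lp ℝ 1 μ) : Ω → ℝ) ω
          - (∫ ω', ((∑ j, X j : Lp ℝ 1 μ) : Ω → ℝ) ω' ∂μ)
          + ∫ ω', (X (⟨0, by omega⟩ : Fin n) : Ω → ℝ) ω' ∂μ)
    (hspec₂ : ∀ X (i : Fin n), i ≠ (⟨0, by omega⟩ : Fin n) →
        (A X i : Ω → ℝ) =ᵐ[μ] fun _ => ∫ ω', (X i : Ω → ℝ) ω' ∂μ) :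
    -- A is a risk sharing rule
    (∀ X, ∑ i, A X i = ∑ i, X i) ∧
    -- Axiom AF
    (∀ X (i : Fin n), ∫ ω, (A X i : Ω → ℝ) ω ∂μ = ∫ ω, (X i : Ω → ℝ) ω ∂μ) ∧
    -- Axiom RA
    (∀ X (i : Fin n), AEStronglyMeasurable[sigmaGen (∑ j, X j)] (A X i : Ω → ℝ) μ) ∧
    -- Axiom OA
    (∀ X (i j : Fin n), i ≠ j → ∀ k, k ≠ i → k ≠ j →
        A (Function.update (Function.update X i (X i + X j)) j 0) k = A X k) ∧
    -- if a non-constant integrable random variable exists, Axiom RF fails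
    ((∃ Z : Lp ℝ 1 μ, ∀ c : ℝ, ¬((Z : Ω → ℝ) =ᵐ[μ] fun _ => c)) →
      ¬ (∀ X (i : Fin n), ∀ᵐ ω ∂μ, ((A X i : Ω → ℝ) ω : EReal)
          ≤ essSup (fun ω' => ((X i : Ω → ℝ) ω' : EReal)) μ)) := by
  classical
  set i0 : Fin n := (⟨0, by omega⟩ : Fin n) with hi0
  -- a.e. description of all components simultaneously
  have hae : ∀ X : Fin n → Lp ℝ 1 μ, ∀ᵐ ω ∂μ, ∀ i, i ≠ i0 →
      (A X i : Ω → ℝ) ω = ∫ ω', (X i : Ω → ℝ) ω' ∂μ := by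
    intro X
    rw [ae_all_iff]
    intro i
    by_cases hi : i = i0
    · exact Filter.Eventually.of_forall fun ω h => absurd hi h
    · filter_upwards [hspec₂ X i hi] with ω hω _ using hω
  constructor
  · -- risk sharing rule
    intro X
    apply Lp.ext
    have hES : ∫ ω', ((∑ j, X j : Lp ℝ 1 μ) : Ω → ℝ) ω' ∂μ
        = ∑ j, ∫ ω', (X j : Ω → ℝ) ω' ∂μ := my_integral_sum _ _
    filter_upwards [my_coeFn_sum Finset.univ (fun i => A X i),
      hspec₁ X, hae X] with ω h1 h3 h4
    rw [h1]
    calc ∑ i, (A X i : Ω → ℝ) ω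
        = (A X i0 : Ω → ℝ) ω + ∑ i ∈ Finset.univ.erase i0, (A X i : Ω → ℝ) ω :=
          (Finset.add_sum_erase _ _ (Finset.mem_univ i0)).symm
      _ = (((∑ j, X j : Lp ℝ 1 μ) : Ω → ℝ) ω
            - (∫ ω', ((∑ j, X j : Lp ℝ 1 μ) : Ω → ℝ) ω' ∂μ)
            + ∫ ω', (X i0 : Ω → ℝ) ω' ∂μ)
          + ∑ i ∈ Finset.univ.erase i0, ∫ ω', (X i : Ω → ℝ) ω' ∂μ := by
          rw [h3, Finset.sum_congr rfl (fun i hi => h4 i (Finset.ne_of_mem_erase hi))]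
      _ = ((∑ j, X j : Lp ℝ 1 μ) : Ω → ℝ) ω := by
          rw [hES, ← Finset.add_sum_erase _ (fun j => ∫ ω', (X j : Ω → ℝ) ω' ∂μ)
            (Finset.mem_univ i0)]
          ring
  constructor
  · -- AF
    intro X i
    by_cases hi : i = i0
    · subst hi
      rw [integral_congr_ae (hspec₁ X)]
      have hf : Integrable (fun ω => ((∑ j, X j : Lp ℝ 1 μ) : Ω → ℝ) ω
          - ∫ ω', ((∑ j, X j : Lp ℝ 1 μ) : Ω → ℝ) ω' ∂μ) μ :=
        (L1.integrable_coeFn _).sub (integrable_const _)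
      rw [integral_add hf (integrable_const _),
        integral_sub (L1.integrable_coeFn _) (integrable_const _), integral_const]
      simp
    · rw [integral_congr_ae (hspec₂ X i hi), integral_const]
      simp
  constructor
  · -- RA
    intro X i
    by_cases hi : i = i0
    · subst hi
      have hS : Measurable[sigmaGen (∑ j, X j)] ((∑ j, X j : Lp ℝ 1 μ) : Ω → ℝ) :=
        measurable_iff_comap_le.2 le_rfl
      exact ⟨_, ((hS.sub measurable_const).add measurable_const).stronglyMeasurable, hspec₁ X⟩
    · exact ⟨_, stronglyMeasurable_const, hspec₂ X i hi⟩
  constructor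
  · -- OA
    intro X i j hij k hki hkj
    set Y := Function.update (Function.update X i (X i + X j)) j 0 with hY
    have hYk : Y k = X k := by
      rw [hY, Function.update_of_ne hkj, Function.update_of_ne hki]
    have hsum : (∑ m, Y m) = ∑ m, X m := by
      rw [hY, Finset.sum_update_of_mem (Finset.mem_univ j),
        Finset.sum_update_of_mem (by simp [hij] : i ∈ Finset.univ \ {j}), zero_add]
      rw [add_assoc,
        show (Finset.univ \ {j}) \ {i} = (Finset.univ.erase i).erase j by
          rw [Finset.erase_eq, Finset.erase_eq]; ext x; simp; tauto,
        Finset.add_sum_erase _ X (Finset.mem_erase.2 ⟨hij.symm, Finset.mem_univ j⟩),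
        Finset.add_sum_erase _ X (Finset.mem_univ i)]
    by_cases hk : k = i0
    · subst hk
      apply Lp.ext
      have h1 := hspec₁ Y
      rw [hsum, hYk] at h1
      exact h1.trans (hspec₁ X).symm
    · apply Lp.ext
      have h1 := hspec₂ Y k hk
      rw [hYk] at h1
      exact h1.trans (hspec₂ X k hk).symm
  · -- ¬RF
    rintro ⟨Z, hZ⟩ hRF
    set i1 : Fin n := (⟨1, by omega⟩ : Fin n) with hi1
    have h01 : i0 ≠ i1 := by simp [hi0, hi1, Fin.ext_iff]
    set X : Fin n → Lp ℝ 1 μ := fun k => if k = i1 then Z else 0 with hX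
    have hS : (∑ j, X j) = Z := by
      rw [hX]
      simp [Finset.sum_ite_eq' Finset.univ i1 (fun _ => Z)]
    have hX0 : X i0 = 0 := by rw [hX]; simp [h01]
    have hE0 : ∫ ω', (X i0 : Ω → ℝ) ω' ∂μ = 0 := by
      rw [hX0, integral_congr_ae (Lp.coeFn_zero ℝ 1 μ)]
      simp
    set EZ := ∫ ω', (Z : Ω → ℝ) ω' ∂μ with hEZ
    have hess : essSup (fun ω' => (((X i0 : Lp ℝ 1 μ) : Ω → ℝ) ω' : EReal)) μ = (0 : EReal) := by
      rw [hX0]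
      have : (fun ω' => (((0 : Lp ℝ 1 μ) : Ω → ℝ) ω' : EReal)) =ᵐ[μ] fun _ => (0 : EReal) := by
        filter_upwards [Lp.coeFn_zero ℝ 1 μ] with ω hω
        simp [hω]
      rw [essSup_congr_ae this, essSup_const _ (IsProbabilityMeasure.ne_zero μ)]
    have h1 := hspec₁ X
    rw [hS, hE0] at h1
    have hle : ∀ᵐ ω ∂μ, (Z : Ω → ℝ) ω ≤ EZ := by
      filter_upwards [hRF X i0, h1] with ω hω h1ω
      rw [hess, h1ω] at hω
      have : ((Z : Ω → ℝ) ω - EZ + 0 : ℝ) ≤ (0 : ℝ) := by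
        exact_mod_cast hω
      linarith
    have hnn : 0 ≤ᵐ[μ] fun ω => EZ - (Z : Ω → ℝ) ω := by
      filter_upwards [hle] with ω hω
      simp [sub_nonneg, hω]
    have hint : Integrable (fun ω => EZ - (Z : Ω → ℝ) ω) μ :=
      (integrable_const _).sub (L1.integrable_coeFn Z)
    have hzero : ∫ ω, (EZ - (Z : Ω → ℝ) ω) ∂μ = 0 := by
      rw [integral_sub (integrable_const _) (L1.integrable_coeFn Z), integral_const]
      simp [hEZ]
    have := (integral_eq_zero_iff_of_nonneg_ae hnn hint).1 hzero
    apply hZ EZ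
    filter_upwards [this] with ω hω
    have : EZ - (Z : Ω → ℝ) ω = 0 := hω
    linarith
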